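/- Let κ be an even integer with 0 ≤ κ < n, and for p ∈ {e, o} and each subset s ⊆ {1,…,2n} with |s| = κ define B_{κ,s}^p := (i^{⌊κ/2⌋} / sqrt(2 · 2^n)) · (c^s + (−1)^{λ_p} P c^s), where λ_e = 0 and λ_o = 1 and P = Z^{⊗n}. Then: (i) these operators are orthonormal, Tr((B_{κ,s}^p)† B_{κ,s′}^{p′}) = δ_{s s′} δ_{p p′}; (ii) they have definite parity, P B_{κ,s}^e = B_{κ,s}^e P = B_{κ,s}^e and P B_{κ,s}^o = B_{κ,s}^o P = −B_{κ,s}^o; and (iii) writing B_κ^e and B_κ^o for the complex spans of {B_{κ,s}^e} and {B_{κ,s}^o} respectively, one has the direct-sum decomposition B_κ ⊕ B_{2n−κ} = B_κ^e ⊕ B_κ^o. -/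

import Mathlib

open Matrix Complex
open scoped Kronecker
open scoped symmDiff

noncomputable section

abbrev QIdx (n : ℕ) := Fin n → Fin 2
abbrev NMat (n : ℕ) := Matrix (QIdx n) (QIdx n) ℂ
abbrev NMat2 (n : ℕ) := Matrix (QIdx n × QIdx n) (QIdx n × QIdx n) ℂ

/-- The 2×2 Pauli X matrix. -/
def σX : Matrix (Fin 2) (Fin 2) ℂ := !![0, 1; 1, 0]
/-- The 2×2 Pauli Y matrix. -/
def σY : Matrix (Fin 2) (Fin 2) ℂ := !![0, -Complex.I; Complex.I, 0]
/-- The 2×2 Pauli Z matrix. -/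
def σZ : Matrix (Fin 2) (Fin 2) ℂ := !![1, 0; 0, -1]

/-- Tensor (Kronecker) product of `n` one-qubit matrices, realized on index type `Fin n → Fin 2`. -/
def tensor {n : ℕ} (M : Fin n → Matrix (Fin 2) (Fin 2) ℂ) : NMat n :=
  Matrix.of fun f g => ∏ i, M i (f i) (g i)

/-- The Jordan–Wigner Majorana operator `c_μ` (0-based index: `c_{2i} = Z^{⊗i} X I…`,
`c_{2i+1} = Z^{⊗i} Y I…`). -/
def majorana (n : ℕ) (μ : Fin (2 * n)) : NMat n :=
  tensor fun j =>
    if (j : ℕ) < (μ : ℕ) / 2 then σZ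
    else if (j : ℕ) = (μ : ℕ) / 2 then (if (μ : ℕ) % 2 = 0 then σX else σY)
    else 1

/-- Ordered product `c^s` of the Majorana operators indexed by a subset `s`. -/
def cProd (n : ℕ) (s : Finset (Fin (2 * n))) : NMat n :=
  ((s.sort (· ≤ ·)).map (majorana n)).prod

/-- The module `B_κ`: the complex span of products of `κ` distinct Majoranas. -/
def Bspace (n κ : ℕ) : Submodule ℂ (NMat n) :=
  Submodule.span ℂ {M | ∃ s : Finset (Fin (2 * n)), s.card = κ ∧ M = cProd n s}

/-- The Pauli string with `Z` on qubit `j` and identity elsewhere. -/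
def pauliZ (n : ℕ) (j : Fin n) : NMat n := tensor fun k => if k = j then σZ else 1

/-- The Pauli string with `X` on qubits `j` and `j+1` and identity elsewhere. -/
def pauliXX (n : ℕ) (j : Fin n) : NMat n :=
  tensor fun k => if (k : ℕ) = (j : ℕ) ∨ (k : ℕ) = (j : ℕ) + 1 then σX else 1

/-- The parity operator `P = Z^{⊗n}`. -/
def parity (n : ℕ) : NMat n := tensor fun _ => σZ


/-- The definite-parity basis element
`B_{κ,s}^λ = (i^{⌊κ/2⌋}/√(2·2^n)) (c^s + (−1)^λ P c^s)` (with `κ = |s|`). -/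
def Bp (n : ℕ) (lam : ℕ) (s : Finset (Fin (2 * n))) : NMat n :=
  ((Complex.I) ^ (s.card / 2) / ((Real.sqrt (2 * 2 ^ n) : ℝ) : ℂ)) •
    (cProd n s + ((-1 : ℂ)) ^ lam • (parity n * cProd n s))

/-- The span of the definite-parity basis elements `B_{κ,s}^λ` over `|s| = κ`. -/
def BparSpace (n κ lam : ℕ) : Submodule ℂ (NMat n) :=
  Submodule.span ℂ {M | ∃ s : Finset (Fin (2 * n)), s.card = κ ∧ M = Bp n lam s}

lemma tensor_mul {n : ℕ} (M N : Fin n → Matrix (Fin 2) (Fin 2) ℂ) :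
    tensor M * tensor N = tensor (fun i => M i * N i) := by
  ext f g
  simp only [tensor, Matrix.mul_apply, Matrix.of_apply]
  conv_rhs => rw [Finset.prod_univ_sum]
  rw [Fintype.piFinset_univ]
  congr 1; ext h
  rw [Finset.prod_mul_distrib]

lemma tensor_one {n : ℕ} : tensor (fun _ : Fin n => (1 : Matrix (Fin 2) (Fin 2) ℂ)) = 1 := by
  ext f g
  simp only [tensor, Matrix.of_apply, Matrix.one_apply]
  by_cases h : f = g
  · subst h; simp
  · rw [if_neg h]
    obtain ⟨i, hi⟩ := Function.ne_iff.mp h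
    exact Finset.prod_eq_zero (Finset.mem_univ i) (by simp [Matrix.one_apply, hi])

lemma tensor_conjTranspose {n : ℕ} (M : Fin n → Matrix (Fin 2) (Fin 2) ℂ) :
    (tensor M)ᴴ = tensor (fun i => (M i)ᴴ) := by
  ext f g
  simp only [tensor, Matrix.conjTranspose_apply, Matrix.of_apply, star_prod]

lemma tensor_smul {n : ℕ} (c : Fin n → ℂ) (M : Fin n → Matrix (Fin 2) (Fin 2) ℂ) :
    tensor (fun i => c i • M i) = (∏ i, c i) • tensor M := by
  ext f g
  simp [tensor, Finset.prod_mul_distrib]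

lemma trace_tensor {n : ℕ} (M : Fin n → Matrix (Fin 2) (Fin 2) ℂ) :
    (tensor M).trace = ∏ i, (M i).trace := by
  simp only [Matrix.trace, Matrix.diag, tensor, Matrix.of_apply]
  conv_rhs => rw [Finset.prod_univ_sum]
  rw [Fintype.piFinset_univ]

lemma tensor_anticomm {n : ℕ} (M N : Fin n → Matrix (Fin 2) (Fin 2) ℂ) (j0 : Fin n)
    (hc : ∀ j, j ≠ j0 → M j * N j = N j * M j) (ha : M j0 * N j0 = -(N j0 * M j0)) :
    tensor M * tensor N = -(tensor N * tensor M) := by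
  rw [tensor_mul, tensor_mul]
  ext f g
  simp only [tensor, Matrix.of_apply, Matrix.neg_apply]
  rw [← Finset.mul_prod_erase _ _ (Finset.mem_univ j0),
      ← Finset.mul_prod_erase _ (fun i => (N i * M i) (f i) (g i)) (Finset.mem_univ j0)]
  rw [ha]
  have : ∀ j ∈ Finset.univ.erase j0, (M j * N j) (f j) (g j) = (N j * M j) (f j) (g j) := by
    intro j hj
    rw [hc j (Finset.mem_erase.mp hj).1]
  rw [Finset.prod_congr rfl this]
  simp [Matrix.neg_apply]

def w (x z : ZMod 2) : Matrix (Fin 2) (Fin 2) ℂ := σX ^ x.val * σZ ^ z.val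

lemma zmod2_cases (x : ZMod 2) : x = 0 ∨ x = 1 := by revert x; decide

lemma v0 : (0 : ZMod 2).val = 0 := rfl
lemma v1 : (1 : ZMod 2).val = 1 := rfl
lemma h2 : (1 + 1 : ZMod 2) = 0 := rfl
lemma h01 : (0 + 1 : ZMod 2) = 1 := rfl
lemma h10 : (1 + 0 : ZMod 2) = 1 := rfl
lemma h00 : (0 + 0 : ZMod 2) = 0 := rfl

lemma w00 : w 0 0 = !![1,0;0,1] := by
  rw [w, v0, pow_zero, pow_zero, one_mul, Matrix.one_fin_two]
lemma w01 : w 0 1 = !![1,0;0,-1] := by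
  rw [w, v0, v1, pow_zero, pow_one, one_mul, σZ]
lemma w10 : w 1 0 = !![0,1;1,0] := by
  rw [w, v0, v1, pow_zero, pow_one, mul_one, σX]
lemma w11 : w 1 1 = !![0,-1;1,0] := by
  rw [w, v1, pow_one, pow_one, σX, σZ, Matrix.mul_fin_two]
  norm_num

lemma w_mul_w (x z x' z' : ZMod 2) :
    w x z * w x' z' = ((-1 : ℂ)) ^ (z.val * x'.val) • w (x + x') (z + z') := by
  rcases zmod2_cases x with rfl | rfl <;> rcases zmod2_cases z with rfl | rfl <;>
    rcases zmod2_cases x' with rfl | rfl <;> rcases zmod2_cases z' with rfl | rfl <;>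
    simp only [h2, h01, h10, h00, v0, v1, w00, w01, w10, w11, Matrix.mul_fin_two,
      Nat.mul_zero, Nat.zero_mul, Nat.mul_one, pow_zero, pow_one, one_smul,
      Matrix.smul_of, Matrix.smul_cons, Matrix.smul_empty, smul_eq_mul] <;>
    norm_num

lemma w_conjTranspose (x z : ZMod 2) :
    (w x z)ᴴ = ((-1 : ℂ)) ^ (x.val * z.val) • w x z := by
  rcases zmod2_cases x with rfl | rfl <;> rcases zmod2_cases z with rfl | rfl <;>
    simp only [v0, v1, w00, w01, w10, w11,
      Nat.mul_zero, Nat.zero_mul, Nat.mul_one, pow_zero, pow_one, one_smul,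
      Matrix.smul_of, Matrix.smul_cons, Matrix.smul_empty, smul_eq_mul] <;>
    (ext i j; fin_cases i <;> fin_cases j <;>
      simp [Matrix.conjTranspose_apply] <;> norm_num)

lemma trace_w (x z : ZMod 2) :
    (w x z).trace = if x = 0 ∧ z = 0 then 2 else 0 := by
  rcases zmod2_cases x with rfl | rfl <;> rcases zmod2_cases z with rfl | rfl <;>
    simp [w00, w01, w10, w11, Matrix.trace_fin_two] <;> norm_num

lemma w_zero_zero : w 0 0 = 1 := by rw [w00, Matrix.one_fin_two]
lemma w_zero_one : w 0 1 = σZ := by rw [w01, σZ]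
lemma w_one_zero : w 1 0 = σX := by rw [w10, σX]
lemma w_one_one : Complex.I • w 1 1 = σY := by
  rw [w11, σY]
  norm_num [Matrix.smul_of, Matrix.smul_cons, Matrix.smul_empty]
def W {n : ℕ} (a b : Fin n → ZMod 2) : NMat n := tensor fun j => w (a j) (b j)

lemma W_mul_W {n : ℕ} (a b a' b' : Fin n → ZMod 2) :
    W a b * W a' b' = (∏ j, ((-1 : ℂ)) ^ ((b j).val * (a' j).val)) • W (a + a') (b + b') := by
  rw [W, W, tensor_mul]
  have : (fun i => w (a i) (b i) * w (a' i) (b' i))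
      = fun i => ((-1 : ℂ)) ^ ((b i).val * (a' i).val) • w ((a + a') i) ((b + b') i) := by
    ext1 i
    rw [w_mul_w]
    rfl
  rw [this, tensor_smul]
  rfl

lemma W_conjTranspose {n : ℕ} (a b : Fin n → ZMod 2) :
    (W a b)ᴴ = (∏ j, ((-1 : ℂ)) ^ ((a j).val * (b j).val)) • W a b := by
  rw [W, tensor_conjTranspose]
  have : (fun i => (w (a i) (b i))ᴴ)
      = fun i => ((-1 : ℂ)) ^ ((a i).val * (b i).val) • w (a i) (b i) := by
    ext1 i
    rw [w_conjTranspose]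
  rw [this, tensor_smul]

lemma trace_W_eq_zero {n : ℕ} (a b : Fin n → ZMod 2) (h : ¬(a = 0 ∧ b = 0)) :
    (W a b).trace = 0 := by
  have : ∃ j, ¬(a j = 0 ∧ b j = 0) := by
    by_contra hall
    push_neg at hall
    exact h ⟨funext fun j => (hall j).1, funext fun j => (hall j).2⟩
  obtain ⟨j, hj⟩ := this
  rw [W, trace_tensor]
  exact Finset.prod_eq_zero (Finset.mem_univ j) (by rw [trace_w, if_neg hj])

/-- `M` is a nonzero scalar multiple of the Pauli string labeled `(a, b)`. -/
def HasLabel {n : ℕ} (M : NMat n) (a b : Fin n → ZMod 2) : Prop :=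
  ∃ c : ℂ, c ≠ 0 ∧ M = c • W a b

lemma HasLabel.mul {n : ℕ} {M N : NMat n} {a b a' b' : Fin n → ZMod 2}
    (hM : HasLabel M a b) (hN : HasLabel N a' b') :
    HasLabel (M * N) (a + a') (b + b') := by
  obtain ⟨c, hc, rfl⟩ := hM
  obtain ⟨d, hd, rfl⟩ := hN
  refine ⟨c * d * ∏ j, ((-1 : ℂ)) ^ ((b j).val * (a' j).val), ?_, ?_⟩
  · refine mul_ne_zero (mul_ne_zero hc hd) (Finset.prod_ne_zero_iff.mpr fun j _ => ?_)
    exact pow_ne_zero _ (by norm_num)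
  · rw [Matrix.smul_mul, Matrix.mul_smul, W_mul_W, smul_smul, smul_smul, mul_assoc]

lemma HasLabel.conjTranspose {n : ℕ} {M : NMat n} {a b : Fin n → ZMod 2}
    (hM : HasLabel M a b) : HasLabel Mᴴ a b := by
  obtain ⟨c, hc, rfl⟩ := hM
  refine ⟨star c * ∏ j, ((-1 : ℂ)) ^ ((a j).val * (b j).val), ?_, ?_⟩
  · refine mul_ne_zero (by simpa using hc) (Finset.prod_ne_zero_iff.mpr fun j _ => ?_)
    exact pow_ne_zero _ (by norm_num)
  · rw [Matrix.conjTranspose_smul, W_conjTranspose, smul_smul]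

lemma HasLabel.trace_eq_zero {n : ℕ} {M : NMat n} {a b : Fin n → ZMod 2}
    (hM : HasLabel M a b) (h : ¬(a = 0 ∧ b = 0)) : M.trace = 0 := by
  obtain ⟨c, hc, rfl⟩ := hM
  rw [Matrix.trace_smul, trace_W_eq_zero a b h, smul_zero]

lemma HasLabel.unique {n : ℕ} {M N : NMat n} {a b : Fin n → ZMod 2}
    (hM : HasLabel M a b) (hN : HasLabel N a b) : ∃ d : ℂ, d ≠ 0 ∧ M = d • N := by
  obtain ⟨c, hc, rfl⟩ := hM
  obtain ⟨e, he, rfl⟩ := hN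
  exact ⟨c / e, div_ne_zero hc he, by rw [smul_smul, div_mul_cancel₀ _ he]⟩
lemma σX_herm : σXᴴ = σX := by
  ext i j; fin_cases i <;> fin_cases j <;> simp [σX]
lemma σY_herm : σYᴴ = σY := by
  ext i j; fin_cases i <;> fin_cases j <;> simp [σY]
lemma σZ_herm : σZᴴ = σZ := by
  ext i j; fin_cases i <;> fin_cases j <;> simp [σZ]
lemma σX_sq : σX * σX = 1 := by
  rw [σX, Matrix.mul_fin_two, Matrix.one_fin_two]; norm_num
lemma σY_sq : σY * σY = 1 := by
  rw [σY, Matrix.mul_fin_two, Matrix.one_fin_two]; norm_num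
lemma σZ_sq : σZ * σZ = 1 := by
  rw [σZ, Matrix.mul_fin_two, Matrix.one_fin_two]; norm_num
lemma σZX_anti : σZ * σX = -(σX * σZ) := by
  rw [σZ, σX, Matrix.mul_fin_two, Matrix.mul_fin_two]
  norm_num
lemma σZY_anti : σZ * σY = -(σY * σZ) := by
  rw [σZ, σY, Matrix.mul_fin_two, Matrix.mul_fin_two]
  norm_num

/-- single-Majorana X-label -/
def a1 {n : ℕ} (μ : Fin (2 * n)) (j : Fin n) : ZMod 2 :=
  if (j : ℕ) = (μ : ℕ) / 2 then 1 else 0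
/-- single-Majorana Z-label -/
def b1 {n : ℕ} (μ : Fin (2 * n)) (j : Fin n) : ZMod 2 :=
  if 2 * (j : ℕ) < (μ : ℕ) then 1 else 0

lemma majorana_factor {n : ℕ} (μ : Fin (2 * n)) (j : Fin n) :
    (if (j : ℕ) < (μ : ℕ) / 2 then σZ
      else if (j : ℕ) = (μ : ℕ) / 2 then (if (μ : ℕ) % 2 = 0 then σX else σY) else 1)
    = (if (j : ℕ) = (μ : ℕ) / 2 ∧ (μ : ℕ) % 2 = 1 then Complex.I else 1) •
        w (a1 μ j) (b1 μ j) := by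
  have hdm := Nat.div_add_mod (μ : ℕ) 2
  have hm2 : (μ : ℕ) % 2 < 2 := Nat.mod_lt _ (by norm_num)
  rcases lt_trichotomy (j : ℕ) ((μ : ℕ) / 2) with hlt | heq | hgt
  · have h1 : ¬((j : ℕ) = (μ : ℕ) / 2) := by omega
    have h2 : 2 * (j : ℕ) < (μ : ℕ) := by omega
    simp [a1, b1, hlt, h1, h2, w_zero_one]
  · have hnlt : ¬((j : ℕ) < (μ : ℕ) / 2) := by omega
    rcases (by omega : (μ : ℕ) % 2 = 0 ∨ (μ : ℕ) % 2 = 1) with h0 | h1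
    · have hne : ¬(2 * (j : ℕ) < (μ : ℕ)) := by omega
      have hne' : ¬(2 * ((μ : ℕ) / 2) < (μ : ℕ)) := by omega
      have hnot1 : ¬((μ : ℕ) % 2 = 1) := by omega
      simp [a1, b1, heq, h0, hne, hne', hnot1, hnlt, w_one_zero]
    · have hne : 2 * (j : ℕ) < (μ : ℕ) := by omega
      have hne' : 2 * ((μ : ℕ) / 2) < (μ : ℕ) := by omega
      have hnot0 : ¬((μ : ℕ) % 2 = 0) := by omega
      simp [a1, b1, heq, h1, hne, hne', hnot0, hnlt, w_one_one]
  · have hn1 : ¬((j : ℕ) < (μ : ℕ) / 2) := by omega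
    have hn2 : ¬((j : ℕ) = (μ : ℕ) / 2) := by omega
    have hn3 : ¬(2 * (j : ℕ) < (μ : ℕ)) := by omega
    simp [a1, b1, hn1, hn2, hn3, w_zero_zero]

lemma majorana_eq {n : ℕ} (μ : Fin (2 * n)) :
    majorana n μ = (if (μ : ℕ) % 2 = 1 then Complex.I else 1) • W (a1 μ) (b1 μ) := by
  rw [majorana]
  have h1 : (fun j : Fin n =>
      if (j : ℕ) < (μ : ℕ) / 2 then σZ
      else if (j : ℕ) = (μ : ℕ) / 2 then (if (μ : ℕ) % 2 = 0 then σX else σY) else 1)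
    = fun j : Fin n => (if (j : ℕ) = (μ : ℕ) / 2 ∧ (μ : ℕ) % 2 = 1 then Complex.I else 1) •
        w (a1 μ j) (b1 μ j) := funext fun j => majorana_factor μ j
  rw [h1, tensor_smul]
  have hj0 : (μ : ℕ) / 2 < n := by
    have := μ.isLt; omega
  have : (∏ j : Fin n, if (j : ℕ) = (μ : ℕ) / 2 ∧ (μ : ℕ) % 2 = 1 then Complex.I else 1)
      = (if (μ : ℕ) % 2 = 1 then Complex.I else 1) := by
    rw [Finset.prod_eq_single (⟨(μ : ℕ) / 2, hj0⟩ : Fin n)]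
    · simp
    · intro j _ hj
      rw [if_neg]
      rintro ⟨h, -⟩
      exact hj (Fin.ext h)
    · simp
  rw [this]
  rfl

lemma majorana_hasLabel {n : ℕ} (μ : Fin (2 * n)) :
    HasLabel (majorana n μ) (a1 μ) (b1 μ) := by
  refine ⟨_, ?_, majorana_eq μ⟩
  split_ifs
  · exact Complex.I_ne_zero
  · exact one_ne_zero

lemma majorana_herm {n : ℕ} (μ : Fin (2 * n)) : (majorana n μ)ᴴ = majorana n μ := by
  rw [majorana, tensor_conjTranspose]
  refine congrArg tensor (funext fun j => ?_)
  split_ifs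
  · exact σZ_herm
  · exact σX_herm
  · exact σY_herm
  · exact Matrix.conjTranspose_one

lemma majorana_sq {n : ℕ} (μ : Fin (2 * n)) : majorana n μ * majorana n μ = 1 := by
  rw [majorana, tensor_mul, ← tensor_one]
  refine congrArg tensor (funext fun j => ?_)
  split_ifs
  · exact σZ_sq
  · exact σX_sq
  · exact σY_sq
  · exact one_mul 1

lemma parity_majorana_anticomm {n : ℕ} (μ : Fin (2 * n)) :
    parity n * majorana n μ = -(majorana n μ * parity n) := by
  have hj0 : (μ : ℕ) / 2 < n := by have := μ.isLt; omega
  rw [parity, majorana]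
  refine tensor_anticomm _ _ ⟨(μ : ℕ) / 2, hj0⟩ (fun j hj => ?_) ?_
  · have hne : (j : ℕ) ≠ (μ : ℕ) / 2 := fun h => hj (Fin.ext h)
    by_cases hlt : (j : ℕ) < (μ : ℕ) / 2
    · rw [if_pos hlt]
    · rw [if_neg hlt, if_neg hne, mul_one, one_mul]
  · have hv : ((⟨(μ : ℕ) / 2, hj0⟩ : Fin n) : ℕ) = (μ : ℕ) / 2 := rfl
    simp only [hv, lt_irrefl, eq_self_iff_true, if_true, if_false]
    split_ifs with h
    · exact σZX_anti
    · exact σZY_anti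

lemma parity_sq {n : ℕ} : parity n * parity n = 1 := by
  rw [parity, tensor_mul, ← tensor_one]
  exact congrArg tensor (funext fun j => σZ_sq)

lemma parity_herm {n : ℕ} : (parity n)ᴴ = parity n := by
  rw [parity, tensor_conjTranspose]
  exact congrArg tensor (funext fun _ => σZ_herm)

lemma parity_hasLabel {n : ℕ} : HasLabel (parity n) 0 (fun _ => 1) := by
  refine ⟨1, one_ne_zero, ?_⟩
  rw [one_smul, parity, W]
  exact congrArg tensor (funext fun j => w_zero_one.symm)
def mprod (n : ℕ) (l : List (Fin (2 * n))) : NMat n := (l.map (majorana n)).prod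

lemma mprod_nil {n : ℕ} : mprod n [] = 1 := rfl
lemma mprod_cons {n : ℕ} (μ : Fin (2 * n)) (l : List (Fin (2 * n))) :
    mprod n (μ :: l) = majorana n μ * mprod n l := by
  rw [mprod, List.map_cons, List.prod_cons, mprod]

lemma one_hasLabel {n : ℕ} : HasLabel (1 : NMat n) 0 0 := by
  refine ⟨1, one_ne_zero, ?_⟩
  rw [one_smul, W, ← tensor_one]
  exact congrArg tensor (funext fun j => w_zero_zero.symm)

lemma mprod_hasLabel {n : ℕ} (l : List (Fin (2 * n))) :
    HasLabel (mprod n l) (fun j => (l.map fun μ => a1 μ j).sum)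
      (fun j => (l.map fun μ => b1 μ j).sum) := by
  induction l with
  | nil => exact one_hasLabel
  | cons μ l ih =>
    rw [mprod_cons]
    have := (majorana_hasLabel μ).mul ih
    convert this using 2 <;> simp

lemma mprod_conjTranspose {n : ℕ} (l : List (Fin (2 * n))) :
    (mprod n l)ᴴ = mprod n l.reverse := by
  induction l with
  | nil => simp [mprod_nil]
  | cons μ l ih =>
    rw [mprod_cons, Matrix.conjTranspose_mul, majorana_herm, ih, List.reverse_cons]
    rw [mprod, mprod, List.map_append, List.prod_append]
    simp

lemma mprod_reverse_mul {n : ℕ} (l : List (Fin (2 * n))) :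
    mprod n l.reverse * mprod n l = 1 := by
  induction l with
  | nil => simp [mprod_nil]
  | cons μ l ih =>
    rw [mprod_cons, List.reverse_cons, mprod, List.map_append, List.prod_append]
    simp only [List.map_cons, List.map_nil, List.prod_cons, List.prod_nil, mul_one]
    calc (l.reverse.map (majorana n)).prod * majorana n μ * (majorana n μ * mprod n l)
        = (l.reverse.map (majorana n)).prod * (majorana n μ * majorana n μ) * mprod n l := by
          rw [mul_assoc, mul_assoc, mul_assoc]
      _ = 1 := by rw [majorana_sq, mul_one]; exact ih

lemma parity_mprod {n : ℕ} (l : List (Fin (2 * n))) :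
    parity n * mprod n l = ((-1 : ℂ)) ^ l.length • (mprod n l * parity n) := by
  induction l with
  | nil => simp [mprod_nil]
  | cons μ l ih =>
    rw [mprod_cons, List.length_cons, ← mul_assoc, parity_majorana_anticomm,
      neg_mul, mul_assoc, ih]
    rw [Matrix.mul_smul, pow_succ, ← neg_smul, mul_assoc]
    congr 1
    ring
def Alab {n : ℕ} (s : Finset (Fin (2 * n))) (j : Fin n) : ZMod 2 := ∑ μ ∈ s, a1 μ j
def Blab {n : ℕ} (s : Finset (Fin (2 * n))) (j : Fin n) : ZMod 2 := ∑ μ ∈ s, b1 μ j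

lemma list_sum_sort {n : ℕ} (s : Finset (Fin (2 * n))) (f : Fin (2 * n) → ZMod 2) :
    ((s.sort (· ≤ ·)).map f).sum = ∑ μ ∈ s, f μ := by
  rw [List.Perm.sum_eq (List.Perm.map f (Finset.sort_perm_toList s _)), Finset.sum_map_toList]

lemma cProd_hasLabel {n : ℕ} (s : Finset (Fin (2 * n))) :
    HasLabel (cProd n s) (Alab s) (Blab s) := by
  have h := mprod_hasLabel (n := n) (s.sort (· ≤ ·))
  have ha : (fun j => ((s.sort (· ≤ ·)).map fun μ => a1 μ j).sum) = Alab s :=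
    funext fun j => list_sum_sort s (fun μ => a1 μ j)
  have hb : (fun j => ((s.sort (· ≤ ·)).map fun μ => b1 μ j).sum) = Blab s :=
    funext fun j => list_sum_sort s (fun μ => b1 μ j)
  rw [ha, hb] at h
  exact h

lemma cProd_conjT_mul_self {n : ℕ} (s : Finset (Fin (2 * n))) :
    (cProd n s)ᴴ * cProd n s = 1 := by
  have : cProd n s = mprod n (s.sort (· ≤ ·)) := rfl
  rw [this, mprod_conjTranspose, mprod_reverse_mul]

lemma parity_cProd {n : ℕ} (s : Finset (Fin (2 * n))) :
    parity n * cProd n s = ((-1 : ℂ)) ^ s.card • (cProd n s * parity n) := by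
  have : cProd n s = mprod n (s.sort (· ≤ ·)) := rfl
  rw [this, parity_mprod, Finset.length_sort]

lemma sum_zmod2_symmDiff {α : Type*} [DecidableEq α] (s s' : Finset α) (f : α → ZMod 2) :
    ∑ μ ∈ s ∆ s', f μ = ∑ μ ∈ s, f μ + ∑ μ ∈ s', f μ := by
  have hsd : s ∆ s' = (s ∪ s') \ (s ∩ s') := by
    ext x
    simp only [Finset.mem_symmDiff, Finset.mem_sdiff, Finset.mem_inter, Finset.mem_union]
    tauto
  have h1 : ∑ μ ∈ (s ∪ s') \ (s ∩ s'), f μ + ∑ μ ∈ s ∩ s', f μ = ∑ μ ∈ s ∪ s', f μ :=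
    Finset.sum_sdiff Finset.inter_subset_union
  have h2 : ∑ μ ∈ s ∪ s', f μ + ∑ μ ∈ s ∩ s', f μ = ∑ μ ∈ s, f μ + ∑ μ ∈ s', f μ :=
    Finset.sum_union_inter
  have hchar : ∀ x : ZMod 2, x + x = 0 := by decide
  calc ∑ μ ∈ s ∆ s', f μ
      = ∑ μ ∈ (s ∪ s') \ (s ∩ s'), f μ + (∑ μ ∈ s ∩ s', f μ + ∑ μ ∈ s ∩ s', f μ) := by
        rw [hchar, add_zero, hsd]
    _ = (∑ μ ∈ (s ∪ s') \ (s ∩ s'), f μ + ∑ μ ∈ s ∩ s', f μ) + ∑ μ ∈ s ∩ s', f μ := by ring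
    _ = ∑ μ ∈ s, f μ + ∑ μ ∈ s', f μ := by rw [h1, h2]

lemma labels_zero_empty {n : ℕ} (t : Finset (Fin (2 * n)))
    (hA : ∀ j, Alab t j = 0) (hB : ∀ j, Blab t j = 0) : t = ∅ := by
  by_contra hne
  have hnonempty : t.Nonempty := Finset.nonempty_of_ne_empty hne
  set m := t.max' hnonempty with hm
  have hmem : m ∈ t := t.max'_mem hnonempty
  have hj0 : (m : ℕ) / 2 < n := by have := m.isLt; omega
  set j0 : Fin n := ⟨(m : ℕ) / 2, hj0⟩ with hj0def
  have hdm := Nat.div_add_mod (m : ℕ) 2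
  have hm2 : (m : ℕ) % 2 < 2 := Nat.mod_lt _ (by norm_num)
  -- step 1 : the filter by μ/2 = m/2 has even card and contains m, so m is odd
  have hAcard : 2 ∣ (t.filter (fun μ : Fin (2 * n) => (j0 : ℕ) = (μ : ℕ) / 2)).card := by
    have h := hA j0
    simp only [Alab, a1] at h
    rw [Finset.sum_boole] at h
    exact (ZMod.natCast_eq_zero_iff _ 2).mp h
  have hmemF : m ∈ t.filter (fun μ : Fin (2 * n) => (j0 : ℕ) = (μ : ℕ) / 2) :=
    Finset.mem_filter.mpr ⟨hmem, rfl⟩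
  have hcard2 : 1 < (t.filter (fun μ : Fin (2 * n) => (j0 : ℕ) = (μ : ℕ) / 2)).card := by
    rcases hAcard with ⟨k, hk⟩
    have : 0 < (t.filter (fun μ : Fin (2 * n) => (j0 : ℕ) = (μ : ℕ) / 2)).card :=
      Finset.card_pos.mpr ⟨m, hmemF⟩
    omega
  obtain ⟨μ1, hμ1, μ2, hμ2, hμ12⟩ := Finset.one_lt_card.mp hcard2
  -- one of μ1, μ2 has value 2*(m/2)+1
  have hv1 := (Finset.mem_filter.mp hμ1).2
  have hv2 := (Finset.mem_filter.mp hμ2).2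
  have ht1 := (Finset.mem_filter.mp hμ1).1
  have ht2 := (Finset.mem_filter.mp hμ2).1
  have hvne : (μ1 : ℕ) ≠ (μ2 : ℕ) := fun h => hμ12 (Fin.ext h)
  have hd1 := Nat.div_add_mod (μ1 : ℕ) 2
  have hd2 := Nat.div_add_mod (μ2 : ℕ) 2
  have hmod1 : (μ1 : ℕ) % 2 < 2 := Nat.mod_lt _ (by norm_num)
  have hmod2 : (μ2 : ℕ) % 2 < 2 := Nat.mod_lt _ (by norm_num)
  have hj0v : (j0 : ℕ) = (m : ℕ) / 2 := rfl
  have hodd : ∃ μo ∈ t, (μo : ℕ) = 2 * ((m : ℕ) / 2) + 1 := by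
    rcases (by omega : (μ1 : ℕ) = 2 * ((m : ℕ) / 2) + 1 ∨ (μ2 : ℕ) = 2 * ((m : ℕ) / 2) + 1)
      with h | h
    · exact ⟨μ1, ht1, h⟩
    · exact ⟨μ2, ht2, h⟩
  obtain ⟨μo, hμot, hμov⟩ := hodd
  have hμole : (μo : ℕ) ≤ (m : ℕ) := t.le_max' μo hμot
  have hmval : (m : ℕ) = 2 * ((m : ℕ) / 2) + 1 := by omega
  have hμom : μo = m := Fin.ext (by omega)
  -- step 2 : the B-filter is exactly {m}, contradicting evenness
  have hBcard : 2 ∣ (t.filter (fun μ : Fin (2 * n) => 2 * (j0 : ℕ) < (μ : ℕ))).card := by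
    have h := hB j0
    simp only [Blab, b1] at h
    rw [Finset.sum_boole] at h
    exact (ZMod.natCast_eq_zero_iff _ 2).mp h
  have hsingle : t.filter (fun μ : Fin (2 * n) => 2 * (j0 : ℕ) < (μ : ℕ)) = {m} := by
    apply Finset.eq_singleton_iff_unique_mem.mpr
    constructor
    · exact Finset.mem_filter.mpr ⟨hmem, by omega⟩
    · intro x hx
      have hxt := (Finset.mem_filter.mp hx).1
      have hxv := (Finset.mem_filter.mp hx).2
      have hxle : (x : ℕ) ≤ (m : ℕ) := t.le_max' x hxt
      exact Fin.ext (by omega)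
  rw [hsingle, Finset.card_singleton] at hBcard
  omega
lemma label_inj {n : ℕ} {s s' : Finset (Fin (2 * n))}
    (hA : Alab s = Alab s') (hB : Blab s = Blab s') : s = s' := by
  have hchar : ∀ x : ZMod 2, x + x = 0 := by decide
  have ht : s ∆ s' = ∅ := by
    apply labels_zero_empty
    · intro j
      rw [Alab, sum_zmod2_symmDiff]
      have : Alab s j = Alab s' j := by rw [hA]
      rw [Alab, Alab] at this
      rw [this, hchar]
    · intro j
      rw [Blab, sum_zmod2_symmDiff]
      have : Blab s j = Blab s' j := by rw [hB]
      rw [Blab, Blab] at this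
      rw [this, hchar]
  have := symmDiff_eq_bot.mp (by rw [ht]; rfl : s ∆ s' = ⊥)
  exact this

lemma Alab_univ {n : ℕ} (j : Fin n) : Alab (Finset.univ : Finset (Fin (2 * n))) j = 0 := by
  rw [Alab]
  simp only [a1]
  rw [Finset.sum_boole]
  have : (Finset.univ.filter fun μ : Fin (2 * n) => (j : ℕ) = (μ : ℕ) / 2)
      = {(⟨2 * (j : ℕ), by omega⟩ : Fin (2 * n)), ⟨2 * (j : ℕ) + 1, by omega⟩} := by
    ext μ
    simp only [Finset.mem_filter, Finset.mem_univ, true_and, Finset.mem_insert,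
      Finset.mem_singleton]
    constructor
    · intro h
      have := μ.isLt
      rcases (by omega : (μ : ℕ) = 2 * (j : ℕ) ∨ (μ : ℕ) = 2 * (j : ℕ) + 1) with h' | h'
      · exact Or.inl (Fin.ext h')
      · exact Or.inr (Fin.ext h')
    · rintro (rfl | rfl) <;> simp <;> try omega
  rw [this, Finset.card_insert_of_notMem (by simp only [Finset.mem_singleton, Fin.ext_iff]; omega), Finset.card_singleton]
  decide

lemma Blab_univ {n : ℕ} (hn : 1 ≤ n) (j : Fin n) :
    Blab (Finset.univ : Finset (Fin (2 * n))) j = 1 := by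
  rw [Blab]
  simp only [b1]
  rw [Finset.sum_boole]
  set K : Fin (2 * n) := ⟨2 * (j : ℕ), by omega⟩ with hK
  have : (Finset.univ.filter fun μ : Fin (2 * n) => 2 * (j : ℕ) < (μ : ℕ))
      = Finset.Ioi K := by
    ext μ
    simp [Finset.mem_Ioi, Fin.lt_def, hK]
  rw [this, Fin.card_Ioi]
  have hKv : (K : ℕ) = 2 * (j : ℕ) := rfl
  have hj := j.isLt
  have h1 : 2 * n - 1 - (K : ℕ) = 2 * (n - 1 - (j : ℕ)) + 1 := by omega
  rw [h1]
  rw [Nat.cast_add, Nat.cast_mul, Nat.cast_ofNat, Nat.cast_one]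
  have h2 : (2 : ZMod 2) = 0 := by decide
  rw [h2, zero_mul, zero_add]

lemma Alab_compl {n : ℕ} (s : Finset (Fin (2 * n))) : Alab sᶜ = Alab s := by
  funext j
  have hsum : Alab s j + Alab sᶜ j = Alab (Finset.univ) j := Finset.sum_add_sum_compl s _
  rw [Alab_univ] at hsum
  have : ∀ x y : ZMod 2, x + y = 0 → y = x := by decide
  exact this _ _ hsum

lemma Blab_compl {n : ℕ} (hn : 1 ≤ n) (s : Finset (Fin (2 * n))) :
    Blab sᶜ = Blab s + fun _ => 1 := by
  funext j
  have hsum : Blab s j + Blab sᶜ j = Blab (Finset.univ) j := Finset.sum_add_sum_compl s _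
  rw [Blab_univ hn] at hsum
  have : ∀ x y : ZMod 2, x + y = 1 → y = x + 1 := by decide
  exact this _ _ hsum
lemma trace_one_NMat {n : ℕ} : (1 : NMat n).trace = (2 : ℂ) ^ n := by
  rw [Matrix.trace_one]
  simp [Fintype.card_fun]

lemma zmod2_add_eq_zero {x y : ZMod 2} (h : x + y = 0) : x = y := by revert x y h; decide

lemma trace_cross {n : ℕ} (s s' : Finset (Fin (2 * n))) :
    ((cProd n s)ᴴ * cProd n s').trace = if s = s' then (2 : ℂ) ^ n else 0 := by
  by_cases h : s = s'
  · subst h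
    rw [if_pos rfl, cProd_conjT_mul_self, trace_one_NMat]
  · rw [if_neg h]
    have hl := ((cProd_hasLabel s).conjTranspose).mul (cProd_hasLabel s')
    refine hl.trace_eq_zero ?_
    rintro ⟨ha, hb⟩
    refine h (label_inj ?_ ?_)
    · funext j
      exact zmod2_add_eq_zero (congrFun ha j)
    · funext j
      exact zmod2_add_eq_zero (congrFun hb j)

lemma trace_middle {n : ℕ} (hn : 1 ≤ n) (s s' : Finset (Fin (2 * n)))
    (hcard : s.card + s'.card ≠ 2 * n) :
    ((cProd n s)ᴴ * (parity n * cProd n s')).trace = 0 := by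
  have hl := ((cProd_hasLabel s).conjTranspose).mul
    ((parity_hasLabel).mul (cProd_hasLabel s'))
  refine hl.trace_eq_zero ?_
  rintro ⟨ha, hb⟩
  -- then s = s'ᶜ
  have hA : Alab s = Alab s'ᶜ := by
    rw [Alab_compl]
    funext j
    have := congrFun ha j
    simp only [Pi.add_apply, Pi.zero_apply, zero_add] at this
    exact zmod2_add_eq_zero this
  have hB : Blab s = Blab s'ᶜ := by
    rw [Blab_compl hn]
    funext j
    have := congrFun hb j
    simp only [Pi.add_apply, Pi.zero_apply] at this
    have h' : Blab s j + (1 + Blab s' j) = 0 := this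
    have : ∀ x y : ZMod 2, x + (1 + y) = 0 → x = y + 1 := by decide
    exact this _ _ h'
  have hss : s = s'ᶜ := label_inj hA hB
  rw [hss, Finset.card_compl] at hcard
  have h1 : s'.card ≤ Fintype.card (Fin (2 * n)) := Finset.card_le_univ s'
  rw [Fintype.card_fin] at *
  omega

lemma parity_cProd_even {n : ℕ} {s : Finset (Fin (2 * n))} (h : Even s.card) :
    parity n * cProd n s = cProd n s * parity n := by
  rw [parity_cProd, h.neg_one_pow, one_smul]

lemma cProd_compl_eq {n : ℕ} (hn : 1 ≤ n) (s : Finset (Fin (2 * n))) :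
    ∃ d : ℂ, d ≠ 0 ∧ cProd n sᶜ = d • (parity n * cProd n s) := by
  have h1 : HasLabel (cProd n sᶜ) (Alab s) (Blab s + fun _ => 1) := by
    have := cProd_hasLabel (n := n) sᶜ
    rwa [Alab_compl, Blab_compl hn] at this
  have h2 : HasLabel (parity n * cProd n s) (Alab s) (Blab s + fun _ => 1) := by
    have h := (parity_hasLabel (n := n)).mul (cProd_hasLabel s)
    have ha : (0 : Fin n → ZMod 2) + Alab s = Alab s := zero_add _
    have hb : (fun (_ : Fin n) => (1 : ZMod 2)) + Blab s = Blab s + fun _ => 1 :=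
      add_comm _ _
    rwa [ha, hb] at h
  exact h1.unique h2
lemma star_gamma_mul {n κ : ℕ} :
    star ((Complex.I) ^ (κ / 2) / ((Real.sqrt (2 * 2 ^ n) : ℝ) : ℂ)) *
      ((Complex.I) ^ (κ / 2) / ((Real.sqrt (2 * 2 ^ n) : ℝ) : ℂ))
    = 1 / ((2 : ℂ) * 2 ^ n) := by
  have hpos : (0 : ℝ) ≤ 2 * 2 ^ n := by positivity
  have hr : (Real.sqrt (2 * 2 ^ n)) * (Real.sqrt (2 * 2 ^ n)) = 2 * 2 ^ n :=
    Real.mul_self_sqrt hpos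
  rw [star_div₀, star_pow]
  have hsI : star Complex.I = -Complex.I := by
    rw [Complex.star_def, Complex.conj_I]
  have hsr : star (((Real.sqrt (2 * 2 ^ n) : ℝ)) : ℂ) = ((Real.sqrt (2 * 2 ^ n) : ℝ) : ℂ) := by
    rw [Complex.star_def, Complex.conj_ofReal]
  rw [hsI, hsr]
  rw [div_mul_div_comm, ← mul_pow]
  have : (-Complex.I) * Complex.I = 1 := by
    rw [neg_mul, Complex.I_mul_I, neg_neg]
  rw [this, one_pow]
  congr 1
  rw [← Complex.ofReal_mul, hr]
  push_cast
  ring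

lemma part1 (n : ℕ) (hn : 1 ≤ n) (κ : ℕ) (hκ : κ < n)
    (s s' : Finset (Fin (2 * n))) (hs : s.card = κ) (hs' : s'.card = κ) (p p' : Fin 2) :
    Matrix.trace ((Bp n (p : ℕ) s)ᴴ * Bp n (p' : ℕ) s') =
      if s = s' ∧ p = p' then 1 else 0 := by
  set γ : ℂ := (Complex.I) ^ (κ / 2) / ((Real.sqrt (2 * 2 ^ n) : ℝ) : ℂ) with hγ
  set D := cProd n s with hD
  set D' := cProd n s' with hD'
  set P := parity n with hP
  set e : ℂ := ((-1 : ℂ)) ^ (p : ℕ) with he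
  set e' : ℂ := ((-1 : ℂ)) ^ (p' : ℕ) with he'
  have hBp : Bp n (p : ℕ) s = γ • (D + e • (P * D)) := by
    rw [Bp, hs]
  have hBp' : Bp n (p' : ℕ) s' = γ • (D' + e' • (P * D')) := by
    rw [Bp, hs']
  have hse : star e = e := by
    rw [he, star_pow, star_neg, star_one]
  -- conjTranspose
  have hct : (Bp n (p : ℕ) s)ᴴ = star γ • (Dᴴ + e • (Dᴴ * P)) := by
    rw [hBp, Matrix.conjTranspose_smul, Matrix.conjTranspose_add, Matrix.conjTranspose_smul,
      Matrix.conjTranspose_mul, parity_herm, hse]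
  -- inner product expansion
  have key : (Dᴴ + e • (Dᴴ * P)) * (D' + e' • (P * D'))
      = (1 + e * e') • (Dᴴ * D') + (e + e') • (Dᴴ * (P * D')) := by
    have h1 : (Dᴴ * P) * D' = Dᴴ * (P * D') := mul_assoc _ _ _
    have h2 : (Dᴴ * P) * (P * D') = Dᴴ * D' := by
      rw [mul_assoc, ← mul_assoc P, hP, parity_sq, one_mul]
    simp only [add_mul, mul_add, Matrix.smul_mul, Matrix.mul_smul, smul_smul]
    rw [h1, h2]
    module
  have hDD' : (Dᴴ * D').trace = if s = s' then (2 : ℂ) ^ n else 0 := trace_cross s s'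
  have hmid : (Dᴴ * (P * D')).trace = 0 := by
    refine trace_middle hn s s' ?_
    omega
  rw [hct, hBp', Matrix.smul_mul, Matrix.mul_smul, smul_smul, key]
  rw [Matrix.trace_smul, Matrix.trace_add, Matrix.trace_smul, Matrix.trace_smul, hDD', hmid,
    smul_zero, add_zero, smul_eq_mul, smul_eq_mul]
  rw [star_gamma_mul]
  by_cases hss : s = s'
  · rw [if_pos hss]
    by_cases hpp : p = p'
    · rw [if_pos ⟨hss, hpp⟩]
      subst hpp
      have hee : e * e' = 1 := by
        rw [he, he', ← pow_add]
        exact Even.neg_one_pow ⟨(p : ℕ), rfl⟩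
      rw [hee]
      have h2n : (2 : ℂ) ^ n ≠ 0 := pow_ne_zero _ two_ne_zero
      field_simp
      ring
    · rw [if_neg (by tauto)]
      have hee : e * e' = -1 := by
        fin_cases p <;> fin_cases p' <;> simp_all [he, he']
      rw [hee]
      ring
  · rw [if_neg hss, if_neg (by tauto)]
    ring
lemma Bp_zero_eq {n : ℕ} (s : Finset (Fin (2 * n))) :
    Bp n 0 s = ((Complex.I) ^ (s.card / 2) / ((Real.sqrt (2 * 2 ^ n) : ℝ) : ℂ)) •
      (cProd n s + parity n * cProd n s) := by
  rw [Bp, pow_zero, one_smul]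

lemma Bp_one_eq {n : ℕ} (s : Finset (Fin (2 * n))) :
    Bp n 1 s = ((Complex.I) ^ (s.card / 2) / ((Real.sqrt (2 * 2 ^ n) : ℝ) : ℂ)) •
      (cProd n s - parity n * cProd n s) := by
  rw [Bp, pow_one, neg_one_smul, ← sub_eq_add_neg]

lemma gamma_ne_zero {n κ : ℕ} :
    ((Complex.I) ^ (κ / 2) / ((Real.sqrt (2 * 2 ^ n) : ℝ) : ℂ)) ≠ 0 := by
  apply div_ne_zero (pow_ne_zero _ Complex.I_ne_zero)
  rw [Ne, Complex.ofReal_eq_zero]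
  have : (0 : ℝ) < Real.sqrt (2 * 2 ^ n) := Real.sqrt_pos.mpr (by positivity)
  linarith

lemma part2 {n : ℕ} (s : Finset (Fin (2 * n))) (heven : Even s.card) :
    parity n * Bp n 0 s = Bp n 0 s ∧ Bp n 0 s * parity n = Bp n 0 s ∧
    parity n * Bp n 1 s = -(Bp n 1 s) ∧ Bp n 1 s * parity n = -(Bp n 1 s) := by
  set D := cProd n s with hD
  set P := parity n with hP
  have hc : P * D = D * P := parity_cProd_even heven
  have h2 : P * P = 1 := parity_sq
  have hPPD : P * (P * D) = D := by rw [← mul_assoc, h2, one_mul]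
  have hDP : D * P = P * D := hc.symm
  have hPDP : (P * D) * P = D := by rw [hc, mul_assoc, h2, mul_one]
  refine ⟨?_, ?_, ?_, ?_⟩
  · rw [Bp_zero_eq, Matrix.mul_smul, mul_add, hPPD, add_comm]
  · rw [Bp_zero_eq, Matrix.smul_mul, add_mul, hDP, hPDP, add_comm]
  · rw [Bp_one_eq, Matrix.mul_smul, mul_sub, hPPD, ← neg_sub D (P * D), smul_neg]
  · rw [Bp_one_eq, Matrix.smul_mul, sub_mul, hDP, hPDP, ← neg_sub D (P * D), smul_neg]

lemma part3 (n : ℕ) (hn : 1 ≤ n) (κ : ℕ) (hκeven : Even κ) (hκ : κ < n) :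
    Bspace n κ ⊔ Bspace n (2 * n - κ) = BparSpace n κ 0 ⊔ BparSpace n κ 1
      ∧ BparSpace n κ 0 ⊓ BparSpace n κ 1 = ⊥ := by
  set P := parity n with hP
  have hcompl : ∀ s : Finset (Fin (2 * n)), s.card = κ → sᶜ.card = 2 * n - κ := by
    intro s hs
    rw [Finset.card_compl, Fintype.card_fin, hs]
  have hsum : ∀ s : Finset (Fin (2 * n)),
      Bp n 0 s + Bp n 1 s
        = (2 * ((Complex.I) ^ (s.card / 2) / ((Real.sqrt (2 * 2 ^ n) : ℝ) : ℂ))) •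
          cProd n s := by
    intro s
    rw [Bp_zero_eq, Bp_one_eq]
    module
  have hdiff : ∀ s : Finset (Fin (2 * n)),
      Bp n 0 s - Bp n 1 s
        = (2 * ((Complex.I) ^ (s.card / 2) / ((Real.sqrt (2 * 2 ^ n) : ℝ) : ℂ))) •
          (P * cProd n s) := by
    intro s
    rw [Bp_zero_eq, Bp_one_eq]
    module
  have h2γ : ∀ m : ℕ,
      (2 * ((Complex.I) ^ (m / 2) / ((Real.sqrt (2 * 2 ^ n) : ℝ) : ℂ))) ≠ 0 :=
    fun m => mul_ne_zero two_ne_zero gamma_ne_zero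
  constructor
  · apply le_antisymm
    · apply sup_le
      · rw [Bspace, Submodule.span_le]
        rintro M ⟨s, hs, rfl⟩
        have h0 : Bp n 0 s ∈ BparSpace n κ 0 ⊔ BparSpace n κ 1 :=
          Submodule.mem_sup_left (Submodule.subset_span ⟨s, hs, rfl⟩)
        have h1 : Bp n 1 s ∈ BparSpace n κ 0 ⊔ BparSpace n κ 1 :=
          Submodule.mem_sup_right (Submodule.subset_span ⟨s, hs, rfl⟩)
        have : (2 * ((Complex.I) ^ (s.card / 2) / ((Real.sqrt (2 * 2 ^ n) : ℝ) : ℂ)))⁻¹ •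
            (Bp n 0 s + Bp n 1 s) = cProd n s := by
          rw [hsum s, smul_smul, inv_mul_cancel₀ (h2γ s.card), one_smul]
        rw [← this]
        exact Submodule.smul_mem _ _ (Submodule.add_mem _ h0 h1)
      · rw [Bspace, Submodule.span_le]
        rintro M ⟨t, ht, rfl⟩
        have hsc : (tᶜ).card = κ := by
          rw [Finset.card_compl, Fintype.card_fin, ht]
          omega
        obtain ⟨d, hd, heq⟩ := cProd_compl_eq hn tᶜ
        rw [compl_compl] at heq
        have h0 : Bp n 0 tᶜ ∈ BparSpace n κ 0 ⊔ BparSpace n κ 1 :=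
          Submodule.mem_sup_left (Submodule.subset_span ⟨tᶜ, hsc, rfl⟩)
        have h1 : Bp n 1 tᶜ ∈ BparSpace n κ 0 ⊔ BparSpace n κ 1 :=
          Submodule.mem_sup_right (Submodule.subset_span ⟨tᶜ, hsc, rfl⟩)
        have hPD : (2 * ((Complex.I) ^ ((tᶜ).card / 2) / ((Real.sqrt (2 * 2 ^ n) : ℝ) : ℂ)))⁻¹ •
            (Bp n 0 tᶜ - Bp n 1 tᶜ) = P * cProd n tᶜ := by
          rw [hdiff tᶜ, smul_smul, inv_mul_cancel₀ (h2γ _), one_smul]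
        rw [heq, ← hPD]
        exact Submodule.smul_mem _ _ (Submodule.smul_mem _ _
          (Submodule.sub_mem _ h0 h1))
    · have hgen : ∀ (s : Finset (Fin (2 * n))), s.card = κ →
          cProd n s ∈ Bspace n κ ⊔ Bspace n (2 * n - κ)
            ∧ P * cProd n s ∈ Bspace n κ ⊔ Bspace n (2 * n - κ) := by
        intro s hs
        constructor
        · exact Submodule.mem_sup_left (Submodule.subset_span ⟨s, hs, rfl⟩)
        · obtain ⟨d, hd, heq⟩ := cProd_compl_eq hn s
          have : P * cProd n s = d⁻¹ • cProd n sᶜ := by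
            rw [heq, smul_smul, inv_mul_cancel₀ hd, one_smul]
          rw [this]
          exact Submodule.smul_mem _ _
            (Submodule.mem_sup_right (Submodule.subset_span ⟨sᶜ, hcompl s hs, rfl⟩))
      apply sup_le
      · rw [BparSpace, Submodule.span_le]
        rintro M ⟨s, hs, rfl⟩
        obtain ⟨hD, hPD⟩ := hgen s hs
        rw [Bp_zero_eq]
        exact Submodule.smul_mem _ _ (Submodule.add_mem _ hD hPD)
      · rw [BparSpace, Submodule.span_le]
        rintro M ⟨s, hs, rfl⟩
        obtain ⟨hD, hPD⟩ := hgen s hs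
        rw [Bp_one_eq]
        exact Submodule.smul_mem _ _ (Submodule.sub_mem _ hD hPD)
  · rw [eq_bot_iff]
    intro x hx
    obtain ⟨hx0, hx1⟩ := Submodule.mem_inf.mp hx
    have h0 : P * x = x := by
      have hle : BparSpace n κ 0 ≤ LinearMap.ker (LinearMap.mulLeft ℂ P - LinearMap.id) := by
        rw [BparSpace, Submodule.span_le]
        rintro M ⟨s, hs, rfl⟩
        rw [SetLike.mem_coe, LinearMap.mem_ker, LinearMap.sub_apply, LinearMap.mulLeft_apply,
          LinearMap.id_apply, (part2 s (hs ▸ hκeven)).1, sub_self]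
      have := LinearMap.mem_ker.mp (hle hx0)
      rw [LinearMap.sub_apply, LinearMap.mulLeft_apply, LinearMap.id_apply, sub_eq_zero] at this
      exact this
    have h1 : P * x = -x := by
      have hle : BparSpace n κ 1 ≤ LinearMap.ker (LinearMap.mulLeft ℂ P + LinearMap.id) := by
        rw [BparSpace, Submodule.span_le]
        rintro M ⟨s, hs, rfl⟩
        rw [SetLike.mem_coe, LinearMap.mem_ker, LinearMap.add_apply, LinearMap.mulLeft_apply,
          LinearMap.id_apply, (part2 s (hs ▸ hκeven)).2.2.1, neg_add_cancel]
      have := LinearMap.mem_ker.mp (hle hx1)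
      rw [LinearMap.add_apply, LinearMap.mulLeft_apply, LinearMap.id_apply,
        add_eq_zero_iff_eq_neg] at this
      exact this
    have hxx : x = -x := h0.symm.trans h1
    have : (2 : ℂ) • x = 0 := by
      rw [two_smul]
      rw [eq_neg_iff_add_eq_zero] at hxx
      exact hxx
    rcases smul_eq_zero.mp this with h | h
    · exact absurd h two_ne_zero
    · rw [h]
      exact Submodule.zero_mem ⊥

/-- For even `κ < n`: (i) the `B_{κ,s}^p` are orthonormal; (ii) they have definite parity;
(iii) `B_κ ⊕ B_{2n−κ} = B_κ^e ⊕ B_κ^o`. -/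
theorem parity_basis (n : ℕ) (hn : 1 ≤ n) (κ : ℕ) (hκeven : Even κ) (hκ : κ < n) :
    (∀ s s' : Finset (Fin (2 * n)), s.card = κ → s'.card = κ → ∀ p p' : Fin 2,
      Matrix.trace ((Bp n (p : ℕ) s)ᴴ * Bp n (p' : ℕ) s') =
        if s = s' ∧ p = p' then 1 else 0)
    ∧ (∀ s : Finset (Fin (2 * n)), s.card = κ →
        parity n * Bp n 0 s = Bp n 0 s ∧ Bp n 0 s * parity n = Bp n 0 s ∧
        parity n * Bp n 1 s = -(Bp n 1 s) ∧ Bp n 1 s * parity n = -(Bp n 1 s))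
    ∧ (Bspace n κ ⊔ Bspace n (2 * n - κ) = BparSpace n κ 0 ⊔ BparSpace n κ 1
        ∧ BparSpace n κ 0 ⊓ BparSpace n κ 1 = ⊥) := by
  exact ⟨fun s s' hs hs' p p' => part1 n hn κ hκ s s' hs hs' p p',
    fun s hs => part2 s (hs ▸ hκeven), part3 n hn κ hκeven hκ⟩

end
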